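/- If a finitely generated group G admits a surjective endomorphism that is not injective (i.e., G is non-Hopfian), then G is not residually finite. -/

import Mathlib

/-- A group is residually finite if every nontrivial element survives in some
finite quotient. -/
def ResiduallyFinite (G : Type*) [Group G] : Prop :=
  ∀ g : G, g ≠ 1 → ∃ (F : Type) (_ : Group F) (_ : Finite F) (φ : G →* F), φ g ≠ 1

lemma finite_homs_of_fg (G : Type*) [Group G] (hfg : Group.FG G)
    (F : Type) [Group F] [Finite F] : Finite (G →* F) := by
  obtain ⟨S, hS⟩ := hfg.1
  have : Function.Injective (fun f : G →* F => fun s : S => f s) := by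
    intro f g h
    refine MonoidHom.eq_of_eqOn_dense hS ?_
    intro x hx
    exact congrFun h ⟨x, hx⟩
  exact Finite.of_injective _ this

/-- A finitely generated non-Hopfian group is not residually finite. -/
theorem not_residually_finite_of_nonHopfian (G : Type*) [Group G]
    (hfg : Group.FG G) (φ : G →* G) (hsurj : Function.Surjective φ)
    (hninj : ¬ Function.Injective φ) :
    ¬ ResiduallyFinite G := by
  intro hrf
  rw [injective_iff_map_eq_one φ] at hninj
  push_neg at hninj
  obtain ⟨g, hg1, hgne⟩ := hninj
  obtain ⟨F, _, _, π, hπ⟩ := hrf g hgne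
  haveI := finite_homs_of_fg G hfg F
  set ψ : Monoid.End G := φ with hψ
  -- the sequence π ∘ ψ^n cannot be injective
  have hni : ¬ Function.Injective (fun n : ℕ => π.comp ((ψ ^ n : Monoid.End G) : G →* G)) :=
    fun h => (Finite.of_injective _ h).false
  rw [Function.not_injective_iff] at hni
  obtain ⟨a, b, hab, hne⟩ := hni
  wlog hlt : a < b generalizing a b
  · exact this b a hab.symm hne.symm (by omega)
  -- ψ^a is surjective
  have hsa : Function.Surjective ((ψ ^ a : Monoid.End G) : G → G) := by
    rw [Monoid.End.coe_pow]
    exact Function.Surjective.iterate hsurj a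
  have hb : ψ ^ b = (ψ ^ (b - a)) * (ψ ^ a) := by
    rw [← pow_add]; congr 1; omega
  have hcomp : π.comp ((ψ ^ b : Monoid.End G) : G →* G)
      = (π.comp ((ψ ^ (b - a) : Monoid.End G) : G →* G)).comp
          ((ψ ^ a : Monoid.End G) : G →* G) := by
    rw [hb]; rfl
  have hπeq : π = π.comp ((ψ ^ (b - a) : Monoid.End G) : G →* G) := by
    ext x
    obtain ⟨y, rfl⟩ := hsa x
    have := congrArg (fun f : G →* F => f y) (hab.trans hcomp)
    exact this
  -- ψ^(b-a) kills g
  have hkill : ((ψ ^ (b - a) : Monoid.End G) : G →* G) g = 1 := by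
    have h1 : ψ ^ (b - a) = (ψ ^ (b - a - 1)) * ψ := by
      rw [← pow_succ]; congr 1; omega
    rw [h1]
    show ((ψ ^ (b - a - 1) : Monoid.End G) : G →* G) (φ g) = 1
    rw [hg1, map_one]
  apply hπ
  rw [hπeq]
  exact (congrArg π hkill).trans (map_one π)
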